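/- In the two-ISP linear demand model, the equilibrium expected utility of the content provider, (2α E[D(θ)]/(2α - β)) · p_a, is the same in all three regimes: no information, full information, and asymmetric information. Equivalently, the total expected equilibrium demand d_1 + d_2 equals 2α E[D(θ)]/(2α - β) in each case. -/

import Mathlib

/-- The CP's equilibrium expected utility (2α·E[D]/(2α-β))·p_a is the same in all three
regimes (no information, full information, asymmetric information): the total expected
equilibrium demand equals 2α·E[D]/(2α-β) in each case. -/
theorem stmt6 {Θ : Type*} [Fintype Θ] (P D : Θ → ℝ)
    (hP : ∀ θ, 0 ≤ P θ) (hPsum : ∑ θ, P θ = 1) (hD : ∀ θ, 0 ≤ D θ)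
    (α β pa : ℝ) (hβ : 0 < β) (hαβ : β < α) (hpa : 0 ≤ pa) :
    -- no information: p₁ = p₂ = E[D]/(2α-β)
    (∑ θ, P θ *
        ((D θ - α * ((∑ θ', P θ' * D θ') / (2 * α - β)) +
            β * ((∑ θ', P θ' * D θ') / (2 * α - β))) +
         (D θ - α * ((∑ θ', P θ' * D θ') / (2 * α - β)) +
            β * ((∑ θ', P θ' * D θ') / (2 * α - β)))) =
      2 * α * (∑ θ, P θ * D θ) / (2 * α - β)) ∧
    -- full information: p₁(θ) = p₂(θ) = D(θ)/(2α-β)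
    (∑ θ, P θ *
        ((D θ - α * (D θ / (2 * α - β)) + β * (D θ / (2 * α - β))) +
         (D θ - α * (D θ / (2 * α - β)) + β * (D θ / (2 * α - β)))) =
      2 * α * (∑ θ, P θ * D θ) / (2 * α - β)) ∧
    -- asymmetric information: p₁(θ) = D(θ)/(2α) + βE[D]/(2α(2α-β)), p₂ = E[D]/(2α-β)
    (∑ θ, P θ *
        ((D θ - α * (D θ / (2 * α) +
              β * (∑ θ', P θ' * D θ') / (2 * α * (2 * α - β))) +
            β * ((∑ θ', P θ' * D θ') / (2 * α - β))) +
         (D θ - α * ((∑ θ', P θ' * D θ') / (2 * α - β)) +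
            β * (D θ / (2 * α) +
              β * (∑ θ', P θ' * D θ') / (2 * α * (2 * α - β))))) =
      2 * α * (∑ θ, P θ * D θ) / (2 * α - β)) ∧
    -- hence all three CP equilibrium expected utilities coincide
    ((∑ θ, P θ *
        ((D θ - α * ((∑ θ', P θ' * D θ') / (2 * α - β)) +
            β * ((∑ θ', P θ' * D θ') / (2 * α - β))) +
         (D θ - α * ((∑ θ', P θ' * D θ') / (2 * α - β)) +
            β * ((∑ θ', P θ' * D θ') / (2 * α - β))))) * pa =
      (∑ θ, P θ *
        ((D θ - α * (D θ / (2 * α - β)) + β * (D θ / (2 * α - β))) +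
         (D θ - α * (D θ / (2 * α - β)) + β * (D θ / (2 * α - β))))) * pa ∧
     (∑ θ, P θ *
        ((D θ - α * (D θ / (2 * α - β)) + β * (D θ / (2 * α - β))) +
         (D θ - α * (D θ / (2 * α - β)) + β * (D θ / (2 * α - β))))) * pa =
      (∑ θ, P θ *
        ((D θ - α * (D θ / (2 * α) +
              β * (∑ θ', P θ' * D θ') / (2 * α * (2 * α - β))) +
            β * ((∑ θ', P θ' * D θ') / (2 * α - β))) +
         (D θ - α * ((∑ θ', P θ' * D θ') / (2 * α - β)) +
            β * (D θ / (2 * α) +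
              β * (∑ θ', P θ' * D θ') / (2 * α * (2 * α - β)))))) * pa) := by
  have hα : (0:ℝ) < α := lt_trans hβ hαβ
  have h2 : (2 * α - β) ≠ 0 := by nlinarith
  have hα' : (α:ℝ) ≠ 0 := ne_of_gt hα
  set E := ∑ θ', P θ' * D θ' with hE
  have key : ∀ (a c : ℝ), (∑ θ, P θ * (a * D θ + c)) = a * E + c := by
    intro a c
    have : (∑ θ, P θ * (a * D θ + c)) = (∑ θ, a * (P θ * D θ)) + (∑ θ, P θ * c) := by
      rw [← Finset.sum_add_distrib]
      exact Finset.sum_congr rfl fun θ _ => by ring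
    rw [this, ← Finset.mul_sum, ← Finset.sum_mul, hPsum, one_mul, ← hE]
  have h1 : (∑ θ, P θ *
        ((D θ - α * (E / (2 * α - β)) + β * (E / (2 * α - β))) +
         (D θ - α * (E / (2 * α - β)) + β * (E / (2 * α - β))))) =
      2 * α * E / (2 * α - β) := by
    rw [show (∑ θ, P θ *
        ((D θ - α * (E / (2 * α - β)) + β * (E / (2 * α - β))) +
         (D θ - α * (E / (2 * α - β)) + β * (E / (2 * α - β))))) =
      ∑ θ, P θ * (2 * D θ + (-(2 * (α - β) * E / (2 * α - β)))) from
      Finset.sum_congr rfl fun θ _ => by ring, key]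
    field_simp
    ring
  have h2' : (∑ θ, P θ *
        ((D θ - α * (D θ / (2 * α - β)) + β * (D θ / (2 * α - β))) +
         (D θ - α * (D θ / (2 * α - β)) + β * (D θ / (2 * α - β))))) =
      2 * α * E / (2 * α - β) := by
    rw [show (∑ θ, P θ *
        ((D θ - α * (D θ / (2 * α - β)) + β * (D θ / (2 * α - β))) +
         (D θ - α * (D θ / (2 * α - β)) + β * (D θ / (2 * α - β))))) =
      ∑ θ, P θ * ((2 * α / (2 * α - β)) * D θ + 0) from
      Finset.sum_congr rfl fun θ _ => by congr 1; linear_combination (-2 * D θ) * mul_inv_cancel₀ h2, key]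
    ring
  have h3 : (∑ θ, P θ *
        ((D θ - α * (D θ / (2 * α) + β * E / (2 * α * (2 * α - β))) +
            β * (E / (2 * α - β))) +
         (D θ - α * (E / (2 * α - β)) +
            β * (D θ / (2 * α) + β * E / (2 * α * (2 * α - β)))))) =
      2 * α * E / (2 * α - β) := by
    rw [show (∑ θ, P θ *
        ((D θ - α * (D θ / (2 * α) + β * E / (2 * α * (2 * α - β))) +
            β * (E / (2 * α - β))) +
         (D θ - α * (E / (2 * α - β)) +
            β * (D θ / (2 * α) + β * E / (2 * α * (2 * α - β)))))) =
      ∑ θ, P θ * ((2 - (α - β) / (2 * α)) * D θ +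
        ((β - α) * (2 * α + β) * E / (2 * α * (2 * α - β)))) from
      Finset.sum_congr rfl fun θ _ => by congr 1; field_simp; ring, key]
    field_simp
    ring
  exact ⟨h1, h2', h3, by rw [h1, h2'], by rw [h2', h3]⟩
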